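/- Let S be a finite set of closed segments in the upper half-plane, each of unit length, each with exactly one endpoint on the x-axis (the ground line). Let s_ℓ and s_r be two intersecting segments of S, and let G(s_ℓ, s_r) be the intersection graph of the segments of S that intersect both s_ℓ and s_r and whose grounded endpoints lie between those of s_ℓ and s_r on the x-axis. Then the ordering of these segments by the x-coordinate of their grounded endpoints is umbrella-free: for any three segments s_a, s_c, s_b appearing in this order, if s_a intersects s_b then s_c intersects s_a or s_c intersects s_b. -/

import Mathlib

lemma cs3 (c1 c2 c3 x1 x2 x3 : ℝ) (h1 : 0 ≤ c1) (h2 : 0 ≤ c2) (h3 : 0 ≤ c3)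
    (hs : c1 + c2 + c3 = 1) :
    (c1*x1 + c2*x2 + c3*x3)^2 ≤ c1*x1^2 + c2*x2^2 + c3*x3^2 := by
  nlinarith [sq_nonneg (x1 - x2), sq_nonneg (x1 - x3), sq_nonneg (x2 - x3),
    mul_nonneg h1 h2, mul_nonneg h1 h3, mul_nonneg h2 h3]

lemma cs2 (c1 c2 x1 x2 : ℝ) (h1 : 0 ≤ c1) (h2 : 0 ≤ c2) (hs : c1 + c2 = 1) :
    (c1*x1 + c2*x2)^2 ≤ c1*x1^2 + c2*x2^2 := by
  nlinarith [sq_nonneg (x1 - x2), mul_nonneg h1 h2]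


lemma sq_le_one_of (d : ℝ) (h1 : 0 ≤ d) (h2 : d ≤ 1) : d^2 ≤ 1 := by nlinarith

lemma pC_bound (xa xc xb px py : ℝ) (h1 : (px-xa)^2+py^2 ≤ 1) (h2 : (px-xb)^2+py^2 ≤ 1)
    (h3 : xa < xc) (h4 : xc < xb) : (px-xc)^2+py^2 ≤ 1 := by
  rcases le_or_gt xc px with h | h
  · nlinarith
  · nlinarith

lemma P_bound (xa xc xb px py : ℝ) (h1 : (px-xa)^2+py^2 ≤ 1) (h2 : (px-xb)^2+py^2 ≤ 1)
    (hpy : 0 < py) (hQ : 1 < xb - xc) : xc - xa < 1 := by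
  nlinarith [sq_nonneg (px-xa-1), sq_nonneg (xb-px-1), mul_pos hpy hpy]

lemma unit_lb (d e : ℝ) (h : d^2 + e^2 = 1) (he : 0 < e) : -1 < d := by nlinarith

lemma WC_bound (Wx Wy xl xc : ℝ) (h1 : (Wx-xl)^2+Wy^2 ≤ 1) (h2 : xl < xc) (h3 : xc ≤ Wx) :
    (Wx-xc)^2+Wy^2 < 1 := by nlinarith



lemma hitA (xa xc fax fay fcx fcy px py sa t : ℝ)
    (hsa0 : 0 ≤ sa) (hsa1 : sa ≤ 1)
    (hpx : px = xa + sa*(fax - xa)) (hpy : py = sa*fay)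
    (hpy0 : 0 < py)
    (ht0 : 0 ≤ t) (ht1 : t ≤ 1)
    (hzy0 : 0 < t*fcy)
    (honl : (px - xa)*(t*fcy) = py*(xc + t*(fcx - xc) - xa))
    (hle : t*fcy ≤ py)
    (hdA : ∀ t' s, 0 ≤ t' → t' ≤ 1 → 0 ≤ s → s ≤ 1 →
      ¬(xc + t'*(fcx - xc) = xa + s*(fax - xa) ∧ t'*fcy = s*fay)) : False := by
  have hsa : 0 < sa := by
    rcases eq_or_lt_of_le hsa0 with h | h
    · exfalso; rw [← h] at hpy; simp at hpy; rw [hpy] at hpy0; linarith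
    · exact h
  have hfay : 0 < fay := by
    by_contra h
    push_neg at h
    have : py ≤ 0 := by rw [hpy]; exact mul_nonpos_of_nonneg_of_nonpos hsa0 h
    linarith
  set r := sa * (t*fcy) / py with hr
  have hr0 : 0 ≤ r := by positivity
  have hr1 : r ≤ 1 := by
    rw [hr]
    rw [div_le_one hpy0]
    calc sa * (t*fcy) ≤ sa * py := by nlinarith
    _ ≤ 1 * py := by nlinarith
    _ = py := by ring
  refine hdA t r ht0 ht1 hr0 hr1 ⟨?_, ?_⟩
  · have h1 : r * (fax - xa) = (xc + t*(fcx - xc)) - xa := by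
      rw [hr]
      rw [div_mul_eq_mul_div, eq_comm, eq_div_iff (ne_of_gt hpy0)]
      calc (xc + t*(fcx - xc) - xa) * py = py*(xc + t*(fcx - xc) - xa) := by ring
      _ = (px - xa)*(t*fcy) := honl.symm
      _ = sa*(fax - xa)*(t*fcy) := by rw [hpx]; ring
      _ = sa * (t * fcy) * (fax - xa) := by ring
    linarith
  · rw [hr]
    field_simp
    rw [hpy]; ring

set_option maxHeartbeats 1000000 in
lemma tent (xa xc xb fax fay fbx fby fcx fcy px py sa sb : ℝ)
    (hfcy : 0 < fcy)
    (hac : xa < xc) (hcb : xc < xb)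
    (hsa0 : 0 ≤ sa) (hsa1 : sa ≤ 1) (hsb0 : 0 ≤ sb) (hsb1 : sb ≤ 1)
    (hpxa : px = xa + sa*(fax - xa)) (hpya : py = sa*fay)
    (hpxb : px = xb + sb*(fbx - xb)) (hpyb : py = sb*fby)
    (hpy0 : 0 < py)
    (hdA : ∀ t s, 0 ≤ t → t ≤ 1 → 0 ≤ s → s ≤ 1 →
      ¬(xc + t*(fcx - xc) = xa + s*(fax - xa) ∧ t*fcy = s*fay))
    (hdB : ∀ t s, 0 ≤ t → t ≤ 1 → 0 ≤ s → s ≤ 1 →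
      ¬(xc + t*(fcx - xc) = xb + s*(fbx - xb) ∧ t*fcy = s*fby)) :
    (px - xa)*fcy - py*(fcx - xa) ≤ 0 ∧ py*(fcx - xb) - (px - xb)*fcy ≤ 0 := by
  set gaF := (px - xa)*fcy - py*(fcx - xa) with hgaF_def
  set gbF := py*(fcx - xb) - (px - xb)*fcy with hgbF_def
  -- affine formulas along s_c
  have gaz : ∀ t : ℝ, (px - xa)*(t*fcy) - py*(xc + t*(fcx - xc) - xa)
      = (1-t)*(-(py*(xc-xa))) + t*gaF := by
    intro t; rw [hgaF_def]; ring
  have gbz : ∀ t : ℝ, py*(xc + t*(fcx - xc) - xb) - (px - xb)*(t*fcy)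
      = (1-t)*(py*(xc-xb)) + t*gbF := by
    intro t; rw [hgbF_def]; ring
  -- helper: a-hit
  have hita : ∀ t : ℝ, 0 < t → t ≤ 1 →
      ((1-t)*(-(py*(xc-xa))) + t*gaF = 0) →
      ((1-t)*(py*(xc-xb)) + t*gbF ≤ 0) → False := by
    intro t ht0 ht1 hza hzb
    have honl : (px - xa)*(t*fcy) = py*(xc + t*(fcx - xc) - xa) := by
      have := gaz t; rw [hza] at this; linarith
    have hle : t*fcy ≤ py := by
      have hE : py*(xc + t*(fcx - xc) - xb) - (px - xb)*(t*fcy)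
          = (xb - xa)*(t*fcy - py) := by linear_combination -honl
      have hE2 : py*(xc + t*(fcx - xc) - xb) - (px - xb)*(t*fcy) ≤ 0 := by
        rw [gbz t]; exact hzb
      nlinarith
    exact hitA xa xc fax fay fcx fcy px py sa t hsa0 hsa1 hpxa hpya hpy0
      (le_of_lt ht0) ht1 (by positivity) honl hle hdA
  -- helper: b-hit
  have hitb : ∀ t : ℝ, 0 < t → t ≤ 1 →
      ((1-t)*(py*(xc-xb)) + t*gbF = 0) →
      ((1-t)*(-(py*(xc-xa))) + t*gaF ≤ 0) → False := by
    intro t ht0 ht1 hzb hza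
    have honl : (px - xb)*(t*fcy) = py*(xc + t*(fcx - xc) - xb) := by
      have := gbz t; rw [hzb] at this; linarith
    have hle : t*fcy ≤ py := by
      have hE : (px - xa)*(t*fcy) - py*(xc + t*(fcx - xc) - xa)
          = (xb - xa)*(t*fcy - py) := by linear_combination honl
      have hE2 : (px - xa)*(t*fcy) - py*(xc + t*(fcx - xc) - xa) ≤ 0 := by
        rw [gaz t]; exact hza
      nlinarith
    exact hitA xb xc fbx fby fcx fcy px py sb t hsb0 hsb1 hpxb hpyb hpy0
      (le_of_lt ht0) ht1 (by positivity) honl hle hdB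
  have hgaC : 0 < py*(xc-xa) := by nlinarith
  have hgbC : py*(xc-xb) < 0 := by nlinarith
  rcases le_or_gt gaF 0 with h1 | h1
  · rcases le_or_gt gbF 0 with h2 | h2
    · exact ⟨h1, h2⟩
    · -- gb crosses
      exfalso
      set t0 := py*(xb-xc)/(gbF + py*(xb-xc)) with ht0_def
      have hden : 0 < gbF + py*(xb-xc) := by nlinarith
      have ht00 : 0 < t0 := div_pos (by nlinarith) hden
      have ht01 : t0 ≤ 1 := by rw [ht0_def, div_le_one hden]; nlinarith
      apply hitb t0 ht00 ht01
      · rw [ht0_def]; field_simp; ring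
      · have : (1-t0)*(-(py*(xc-xa))) ≤ 0 := by nlinarith
        have h2' : t0*gaF ≤ 0 := by nlinarith
        linarith
  · -- gaF > 0 : ga crosses at t0
    exfalso
    set t0 := py*(xc-xa)/(gaF + py*(xc-xa)) with ht0_def
    have hden : 0 < gaF + py*(xc-xa) := by nlinarith
    have ht00 : 0 < t0 := div_pos hgaC hden
    have ht01 : t0 ≤ 1 := by rw [ht0_def, div_le_one hden]; nlinarith
    have hza0 : (1-t0)*(-(py*(xc-xa))) + t0*gaF = 0 := by
      rw [ht0_def]; field_simp; ring
    rcases le_or_gt ((1-t0)*(py*(xc-xb)) + t0*gbF) 0 with h2 | h2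
    · exact hita t0 ht00 ht01 hza0 h2
    · -- gb also crosses, earlier
      have hgbF : 0 < gbF := by nlinarith
      set t1 := py*(xb-xc)/(gbF + py*(xb-xc)) with ht1_def
      have hden1 : 0 < gbF + py*(xb-xc) := by nlinarith
      have ht10 : 0 < t1 := div_pos (by nlinarith) hden1
      have ht11 : t1 ≤ 1 := by rw [ht1_def, div_le_one hden1]; nlinarith
      have hzb1 : (1-t1)*(py*(xc-xb)) + t1*gbF = 0 := by
        rw [ht1_def]; field_simp; ring
      -- t1 < t0
      have hlt : t1 < t0 := by
        -- gbz is affine increasing: slope gbF - py*(xc-xb) > 0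
        -- value at t0 > 0, at t1 = 0
        have hslope : 0 < gbF - py*(xc-xb) := by nlinarith
        have e1 : py*(xc-xb) + t1*(gbF - py*(xc-xb)) = 0 := by linarith [hzb1]; 
        have e2 : 0 < py*(xc-xb) + t0*(gbF - py*(xc-xb)) := by nlinarith [h2]
        nlinarith
      apply hitb t1 ht10 ht11 hzb1
      -- gaz t1 ≤ 0 : affine with value at 0 neg, at t0 zero, t1 < t0
      have e1 : -(py*(xc-xa)) + t0*(gaF + py*(xc-xa)) = 0 := by linarith [hza0]
      nlinarith

set_option maxHeartbeats 1000000 in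
lemma core1 (xa xc xb fax fay fbx fby fcx fcy px py sa sb : ℝ)
    (hfcy : 0 < fcy) (huc : (fcx - xc)^2 + fcy^2 = 1)
    (hac : xa < xc) (hcb : xc < xb)
    (hP : xc - xa ≤ 1) (hQ : xb - xc ≤ 1)
    (hsa0 : 0 ≤ sa) (hsa1 : sa ≤ 1) (hsb0 : 0 ≤ sb) (hsb1 : sb ≤ 1)
    (hpxa : px = xa + sa*(fax - xa)) (hpya : py = sa*fay)
    (hpxb : px = xb + sb*(fbx - xb)) (hpyb : py = sb*fby)
    (hpy0 : 0 < py)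
    (hApSq : (px - xa)^2 + py^2 ≤ 1)
    (hBpSq : (px - xb)^2 + py^2 ≤ 1)
    (hdA : ∀ t s, 0 ≤ t → t ≤ 1 → 0 ≤ s → s ≤ 1 →
      ¬(xc + t*(fcx - xc) = xa + s*(fax - xa) ∧ t*fcy = s*fay))
    (hdB : ∀ t s, 0 ≤ t → t ≤ 1 → 0 ≤ s → s ≤ 1 →
      ¬(xc + t*(fcx - xc) = xb + s*(fbx - xb) ∧ t*fcy = s*fby)) : False := by
  obtain ⟨hgaF, hgbF⟩ := tent xa xc xb fax fay fbx fby fcx fcy px py sa sb hfcy hac hcb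
    hsa0 hsa1 hsb0 hsb1 hpxa hpya hpxb hpyb hpy0 hdA hdB
  have hab : xa < xb := lt_trans hac hcb
  set γ := fcy/py with hγ_def
  set β := -((px - xa)*fcy - py*(fcx - xa))/(py*(xb-xa)) with hβ_def
  set α := -(py*(fcx - xb) - (px - xb)*fcy)/(py*(xb-xa)) with hα_def
  have hden : 0 < py*(xb-xa) := by nlinarith
  have hγ0 : 0 < γ := div_pos hfcy hpy0
  have hβ0 : 0 ≤ β := by
    rw [hβ_def]; apply div_nonneg (by linarith) (le_of_lt hden)
  have hα0 : 0 ≤ α := by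
    rw [hα_def]; apply div_nonneg (by linarith) (le_of_lt hden)
  have hsum : α + β + γ = 1 := by
    have : xb - xa ≠ 0 := by linarith
    rw [hα_def, hβ_def, hγ_def]; field_simp; ring
  have hfcx : fcx = α*xa + β*xb + γ*px := by
    have : xb - xa ≠ 0 := by linarith
    rw [hα_def, hβ_def, hγ_def]; field_simp; ring
  have hfcy2 : fcy = γ*py := by
    rw [hγ_def]; field_simp
  -- |p - C|^2 ≤ 1
  have hpC : (px - xc)^2 + py^2 ≤ 1 := by
    rcases le_or_gt xc px with h | h
    · nlinarith
    · nlinarith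
  -- strict convexity identity and conclusion  α = β = 0
  have hkey : γ*py^2*(α+β) ≤ 0 := by
    have idx : (fcx - xc)^2 = α*(xa-xc)^2 + β*(xb-xc)^2 + γ*(px-xc)^2
        - (α*β*(xa-xb)^2 + α*γ*(xa-px)^2 + β*γ*(xb-px)^2) := by
      have hα' : α = 1 - β - γ := by linarith
      rw [hfcx, hα']; ring
    have idy : fcy^2 = γ*py^2 - (α*γ*py^2 + β*γ*py^2) := by
      have hα' : α = 1 - β - γ := by linarith
      rw [hfcy2, hα']; ring
    have hxa2 : (xa-xc)^2 ≤ 1 := by nlinarith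
    have hxb2 : (xb-xc)^2 ≤ 1 := by nlinarith
    nlinarith [mul_nonneg (mul_nonneg hα0 hβ0) (sq_nonneg (xa-xb)),
      mul_nonneg (mul_nonneg hα0 (le_of_lt hγ0)) (sq_nonneg (xa-px)),
      mul_nonneg (mul_nonneg hβ0 (le_of_lt hγ0)) (sq_nonneg (xb-px)),
      hpC]
  have hαβ : α + β ≤ 0 := by
    have : 0 < γ*py^2 := by positivity
    nlinarith
  have hα00 : α = 0 := by linarith
  have hβ00 : β = 0 := by linarith
  have hγ1 : γ = 1 := by linarith
  have hfcxp : fcx = px := by rw [hfcx, hα00, hβ00, hγ1]; ring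
  have hfcyp : fcy = py := by rw [hfcy2, hγ1]; ring
  exact hitA xa xc fax fay fcx fcy px py sa 1 hsa0 hsa1 hpxa hpya hpy0
    zero_le_one le_rfl (by linarith) (by rw [hfcxp, hfcyp]; ring) (by linarith) hdA
set_option maxHeartbeats 2000000 in
lemma core2 (xl xa xc xb flx fly fax fay fbx fby fcx fcy px py sa sb tc tl wb wl : ℝ)
    (hfly : 0 < fly) (hul : (flx - xl)^2 + fly^2 = 1)
    (hfby : 0 < fby) (hub : (fbx - xb)^2 + fby^2 = 1)
    (hfcy : 0 < fcy) (huc : (fcx - xc)^2 + fcy^2 = 1)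
    (hxla : xl ≤ xa) (hac : xa < xc) (hcb : xc < xb)
    (hQ1 : 1 < xb - xc)
    (hsa0 : 0 ≤ sa) (hsa1 : sa ≤ 1) (hsb0 : 0 ≤ sb) (hsb1 : sb ≤ 1)
    (hpxa : px = xa + sa*(fax - xa)) (hpya : py = sa*fay)
    (hpxb : px = xb + sb*(fbx - xb)) (hpyb : py = sb*fby)
    (hpy0 : 0 < py)
    (hApSq : (px - xa)^2 + py^2 ≤ 1)
    (hBpSq : (px - xb)^2 + py^2 ≤ 1)
    (htc0 : 0 ≤ tc) (htc1 : tc ≤ 1) (htl0 : 0 ≤ tl) (htl1 : tl ≤ 1)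
    (hux : xc + tc*(fcx - xc) = xl + tl*(flx - xl)) (huy : tc*fcy = tl*fly)
    (hwb0 : 0 ≤ wb) (hwb1 : wb ≤ 1) (hwl0 : 0 ≤ wl) (hwl1 : wl ≤ 1)
    (hwx : xb + wb*(fbx - xb) = xl + wl*(flx - xl)) (hwy : wb*fby = wl*fly)
    (hdA : ∀ t s, 0 ≤ t → t ≤ 1 → 0 ≤ s → s ≤ 1 →
      ¬(xc + t*(fcx - xc) = xa + s*(fax - xa) ∧ t*fcy = s*fay))
    (hdB : ∀ t s, 0 ≤ t → t ≤ 1 → 0 ≤ s → s ≤ 1 →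
      ¬(xc + t*(fcx - xc) = xb + s*(fbx - xb) ∧ t*fcy = s*fby)) : False := by
  obtain ⟨hgaF, hgbF⟩ := tent xa xc xb fax fay fbx fby fcx fcy px py sa sb hfcy hac hcb
    hsa0 hsa1 hsb0 hsb1 hpxa hpya hpxb hpyb hpy0 hdA hdB
  have hab : xa < xb := lt_trans hac hcb
  -- the decomposition F = α A + β B + γ p
  obtain ⟨γ, hγ_def⟩ : ∃ g, g = fcy/py := ⟨_, rfl⟩
  obtain ⟨β, hβ_def⟩ : ∃ b, b = -((px - xa)*fcy - py*(fcx - xa))/(py*(xb-xa)) := ⟨_, rfl⟩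
  obtain ⟨α, hα_def⟩ : ∃ a, a = -(py*(fcx - xb) - (px - xb)*fcy)/(py*(xb-xa)) := ⟨_, rfl⟩
  have hden : 0 < py*(xb-xa) := mul_pos hpy0 (by linarith only [hab])
  have hγ0 : 0 < γ := by rw [hγ_def]; exact div_pos hfcy hpy0
  have hβ0 : 0 ≤ β := by
    rw [hβ_def]; exact div_nonneg (by linarith only [hgaF]) (le_of_lt hden)
  have hα0 : 0 ≤ α := by
    rw [hα_def]; exact div_nonneg (by linarith only [hgbF]) (le_of_lt hden)
  have hsum : α + β + γ = 1 := by
    have : xb - xa ≠ 0 := by linarith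
    rw [hα_def, hβ_def, hγ_def]; field_simp; ring
  have hfcx : fcx = α*xa + β*xb + γ*px := by
    have : xb - xa ≠ 0 := by linarith
    rw [hα_def, hβ_def, hγ_def]; field_simp; ring
  have hfcy2 : fcy = γ*py := by
    rw [hγ_def]; field_simp
  have hpC : (px - xc)^2 + py^2 ≤ 1 := pC_bound xa xc xb px py hApSq hBpSq hac hcb
  have hP : xc - xa < 1 := P_bound xa xc xb px py hApSq hBpSq hpy0 hQ1
  -- u = c(tc) = l(tl)
  have htc : 0 < tc := by
    rcases eq_or_lt_of_le htc0 with h | h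
    · exfalso
      have h1 : tl*fly = 0 := by rw [← huy, ← h]; ring
      have h2 : tl = 0 := by
        rcases mul_eq_zero.mp h1 with h3 | h3
        · exact h3
        · exact absurd h3 (ne_of_gt hfly)
      rw [← h, h2] at hux
      simp at hux
      linarith only [hux, hxla, hac]
    · exact h
  obtain ⟨Ux, hUx⟩ : ∃ u, u = xc + tc*(fcx - xc) := ⟨_, rfl⟩
  obtain ⟨Uy, hUy⟩ : ∃ u, u = tc*fcy := ⟨_, rfl⟩
  have hUy0 : 0 < Uy := by rw [hUy]; exact mul_pos htc hfcy
  obtain ⟨glF, hglF_def⟩ : ∃ g, g = (Ux - xl)*fcy - Uy*(fcx - xl) := ⟨_, rfl⟩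
  obtain ⟨glp, hglp_def⟩ : ∃ g, g = (Ux - xl)*py - Uy*(px - xl) := ⟨_, rfl⟩
  have hglB : 0 < Uy*(xb - xl) := mul_pos hUy0 (by linarith only [hxla, hac, hcb])
  have hglF0 : 0 ≤ glF := by
    have hid : tc*glF = (1-tc)*(Uy*(xc-xl)) := by
      rw [hglF_def, hUx, hUy]; ring
    have h1 : 0 ≤ (1-tc)*(Uy*(xc-xl)) :=
      mul_nonneg (by linarith only [htc1])
        (mul_nonneg (le_of_lt hUy0) (by linarith only [hxla, hac]))
    by_contra hcon
    push_neg at hcon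
    have h2 : tc*glF < 0 := mul_neg_of_pos_of_neg htc hcon
    linarith only [hid, h1, h2]
  -- w = b(wb) = l(wl)
  obtain ⟨Wx, hWx⟩ : ∃ w, w = xb + wb*(fbx - xb) := ⟨_, rfl⟩
  obtain ⟨Wy, hWy⟩ : ∃ w, w = wb*fby := ⟨_, rfl⟩
  have hglW : (Ux - xl)*Wy - Uy*(Wx - xl) = 0 := by
    rw [hUx, hUy, hWx, hWy]
    linear_combination (wb*fby)*hux + (tl*(flx-xl))*hwy - (tc*fcy)*hwx - (wl*(flx-xl))*huy
  have hwlsq : (Wx - xl)^2 + Wy^2 ≤ 1 := by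
    have e3 : Wx - xl = wl*(flx - xl) := by rw [hWx]; linarith only [hwx]
    have e4 : Wy = wl*fly := by rw [hWy]; exact hwy
    have e5 : (Wx - xl)^2 + Wy^2 = wl^2 := by
      rw [e3, e4]; linear_combination wl^2*hul
    have e6 : wl^2 ≤ 1 := sq_le_one_of wl hwl0 hwl1
    linarith only [e5, e6]
  have hWxlb : xb - 1 ≤ Wx := by
    have hfbx : -1 < fbx - xb := unit_lb (fbx - xb) fby hub hfby
    have h5' : wb*(-1) ≤ wb*(fbx-xb) := mul_le_mul_of_nonneg_left (le_of_lt hfbx) hwb0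
    have h5 : -wb ≤ wb*(fbx-xb) := by linarith only [h5']
    rw [hWx]; linarith only [h5, hwb1]
  have hWC : (Wx - xc)^2 + Wy^2 < 1 :=
    WC_bound Wx Wy xl xc hwlsq (by linarith only [hxla, hac])
      (by linarith only [hWxlb, hQ1])
  have hafff : glF = α*(-(Uy*(xa-xl))) + β*(-(Uy*(xb-xl))) + γ*glp := by
    rw [hglF_def, hglp_def]
    linear_combination (Ux - xl)*hfcy2 - Uy*hfcx - Uy*xl*hsum
  -- tail once β = 0
  have tail : β = 0 → False := by
    intro hβz
    have hfcx' : fcx = α*xa + γ*px := by rw [hfcx, hβz]; ring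
    have hα' : α = 1 - γ := by rw [hβz] at hsum; linarith only [hsum]
    have hγ1 : γ ≤ 1 := by linarith only [hα', hα0]
    have hfcyle : fcy ≤ py := by
      have := mul_le_mul_of_nonneg_right hγ1 (le_of_lt hpy0)
      rw [one_mul] at this
      linarith only [this, hfcy2]
    exact hitA xa xc fax fay fcx fcy px py sa 1 hsa0 hsa1 hpxa hpya hpy0
      zero_le_one le_rfl (by linarith only [hfcy])
      (by rw [hfcx', hfcy2, hα']; ring)
      (by linarith only [hfcyle]) hdA
  -- case split on glp
  rcases le_or_gt glp 0 with hglp | hglp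
  · -- all of T on one side of line l: forces β = 0
    have hglA : -(Uy*(xa-xl)) ≤ 0 := by
      have := mul_nonneg (le_of_lt hUy0) (by linarith only [hxla] : (0:ℝ) ≤ xa - xl)
      linarith only [this]
    apply tail
    have t1 : α*(-(Uy*(xa-xl))) ≤ 0 := mul_nonpos_of_nonneg_of_nonpos hα0 hglA
    have t2 : γ*glp ≤ 0 := mul_nonpos_of_nonneg_of_nonpos (le_of_lt hγ0) hglp
    have t3 : 0 ≤ β*(-(Uy*(xb-xl))) := by linarith only [hafff, hglF0, t1, t2]
    rcases eq_or_lt_of_le hβ0 with h | h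
    · exact h.symm
    · exfalso
      have h4 : 0 < β*(Uy*(xb-xl)) := mul_pos h hglB
      linarith only [t3, h4]
  · -- glp > 0
    obtain ⟨lam, hlam_def⟩ : ∃ l, l = (Uy*(xa-xl))/(glp + Uy*(xa-xl)) := ⟨_, rfl⟩
    have hglA : 0 ≤ Uy*(xa-xl) :=
      mul_nonneg (le_of_lt hUy0) (by linarith only [hxla])
    have hdlam : 0 < glp + Uy*(xa-xl) := by linarith only [hglp, hglA]
    have hlam0 : 0 ≤ lam := by rw [hlam_def]; exact div_nonneg hglA (le_of_lt hdlam)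
    have hlam1 : lam < 1 := by
      rw [hlam_def, div_lt_one hdlam]; linarith only [hglp]
    have hlamX : lam*(glp + Uy*(xa-xl)) = Uy*(xa-xl) := by
      rw [hlam_def]; exact div_mul_cancel₀ _ (ne_of_gt hdlam)
    have hlamA : (1-lam)*(-(Uy*(xa-xl))) = -(lam*glp) := by
      linear_combination hlamX
    have hsb : 0 < sb := by
      rcases eq_or_lt_of_le hsb0 with h | h
      · exfalso
        rw [← h] at hpyb; simp at hpyb; linarith only [hpyb, hpy0]
      · exact h
    obtain ⟨μ, hμ_def⟩ : ∃ m, m = wb/sb := ⟨_, rfl⟩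
    have hμ0 : 0 ≤ μ := by rw [hμ_def]; exact div_nonneg hwb0 (le_of_lt hsb)
    have hwbμ : wb = μ*sb := by rw [hμ_def]; field_simp
    have hWxc : Wx = xb + μ*(px - xb) := by
      rw [hWx, hwbμ]; linear_combination (-μ)*hpxb
    have hWyc : Wy = μ*py := by
      rw [hWy, hwbμ]; linear_combination (-μ)*hpyb
    have hglWcomb : (1-μ)*(-(Uy*(xb-xl))) + μ*glp = 0 := by
      have h := hglW
      rw [hWxc, hWyc] at h
      rw [hglp_def]
      linear_combination h
    have hμ1 : μ < 1 := by
      by_contra hcon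
      push_neg at hcon
      have t1 : 0 ≤ (μ-1)*(Uy*(xb-xl)) :=
        mul_nonneg (by linarith only [hcon]) (le_of_lt hglB)
      have t2 : 0 < μ*glp := mul_pos (by linarith only [hcon]) hglp
      linarith only [hglWcomb, t1, t2]
    have hmuB : (1-μ)*(-(Uy*(xb-xl))) = -(μ*glp) := by linarith only [hglWcomb]
    -- weights
    obtain ⟨c1, hc1_def⟩ : ∃ c, c = α/(1-lam) := ⟨_, rfl⟩
    obtain ⟨c2, hc2_def⟩ : ∃ c, c = β/(1-μ) := ⟨_, rfl⟩
    have h1lam : 0 < 1 - lam := by linarith only [hlam1]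
    have h1μ : 0 < 1 - μ := by linarith only [hμ1]
    have hc10 : 0 ≤ c1 := by rw [hc1_def]; exact div_nonneg hα0 (le_of_lt h1lam)
    have hc20 : 0 ≤ c2 := by rw [hc2_def]; exact div_nonneg hβ0 (le_of_lt h1μ)
    have hc1l : c1*(1-lam) = α := by rw [hc1_def]; field_simp
    have hc2m : c2*(1-μ) = β := by rw [hc2_def]; field_simp
    have hbig : 0 ≤ -(α*lam*(1-μ)) - β*μ*(1-lam) + γ*(1-lam)*(1-μ) := by
      have e : (α*(-(Uy*(xa-xl))) + β*(-(Uy*(xb-xl))) + γ*glp)*((1-lam)*(1-μ))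
          = glp*(-(α*lam*(1-μ)) - β*μ*(1-lam) + γ*(1-lam)*(1-μ)) := by
        linear_combination (α*(1-μ))*hlamA + (β*(1-lam))*hmuB
      have h0 : 0 ≤ (α*(-(Uy*(xa-xl))) + β*(-(Uy*(xb-xl))) + γ*glp)*((1-lam)*(1-μ)) := by
        rw [← hafff]
        exact mul_nonneg hglF0 (le_of_lt (mul_pos h1lam h1μ))
      by_contra hcon
      push_neg at hcon
      have h5 : glp*(-(α*lam*(1-μ)) - β*μ*(1-lam) + γ*(1-lam)*(1-μ)) < 0 :=
        mul_neg_of_pos_of_neg hglp hcon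
      linarith only [e, h0, h5]
    have hc3 : 0 ≤ 1 - c1 - c2 := by
      have e2 : (1-lam)*(1-μ) - α*(1-μ) - β*(1-lam)
          = -(α*lam*(1-μ)) - β*μ*(1-lam) + γ*(1-lam)*(1-μ) := by
        linear_combination (-(1-lam)*(1-μ))*hsum
      have h : α*(1-μ) + β*(1-lam) ≤ (1-lam)*(1-μ) := by linarith only [hbig, e2]
      have h2 : c1 + c2 ≤ 1 := by
        rw [hc1_def, hc2_def, div_add_div _ _ (ne_of_gt h1lam) (ne_of_gt h1μ),
          div_le_one (mul_pos h1lam h1μ)]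
        linarith only [h]
      linarith only [h2]
    have hsumc : c1 + c2 + (1 - c1 - c2) = 1 := by ring
    -- decomposition of F
    have hFx : fcx - xc = c1*((1-lam)*(xa-xc) + lam*(px-xc)) + c2*(Wx - xc)
        + (1-c1-c2)*(px - xc) := by
      rw [hWxc]
      linear_combination hfcx + (px - xa)*hc1l + (px - xb)*hc2m + px*hsum
    have hFy : fcy = c1*(lam*py) + c2*Wy + (1-c1-c2)*py := by
      rw [hWyc]
      linear_combination hfcy2 + py*hc1l + py*hc2m + py*hsum
    -- distance bounds
    have he1C : ((1-lam)*(xa-xc) + lam*(px-xc))^2 + (lam*py)^2 ≤ 1 := by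
      have j := cs2 (1-lam) lam (xa-xc) (px-xc) (le_of_lt h1lam) hlam0 (by ring)
      have hxa2 : (xa-xc)^2 ≤ 1 := by
        have : (xa-xc)^2 = (xc-xa)^2 := by ring
        rw [this]
        exact sq_le_one_of (xc-xa) (by linarith only [hac]) (le_of_lt hP)
      have hll : lam*lam ≤ lam := by
        have := mul_le_mul_of_nonneg_left (le_of_lt hlam1) hlam0
        linarith only [this]
      have b1 : (1-lam)*(xa-xc)^2 ≤ (1-lam)*1 :=
        mul_le_mul_of_nonneg_left hxa2 (le_of_lt h1lam)
      have b2 : lam*((px-xc)^2 + py^2) ≤ lam*1 :=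
        mul_le_mul_of_nonneg_left hpC hlam0
      have b3 : (lam*py)^2 ≤ lam*py^2 := by
        have h6 : 0 ≤ (lam - lam*lam)*py^2 :=
          mul_nonneg (by linarith only [hll]) (sq_nonneg py)
        linarith only [h6]
      linarith only [j, b1, b2, b3]
    -- final Jensen
    have jx := cs3 c1 c2 (1-c1-c2) ((1-lam)*(xa-xc) + lam*(px-xc)) (Wx - xc) (px - xc)
      hc10 hc20 hc3 hsumc
    have jy := cs3 c1 c2 (1-c1-c2) (lam*py) Wy py hc10 hc20 hc3 hsumc
    have hx2 : (fcx - xc)^2 ≤ c1*((1-lam)*(xa-xc) + lam*(px-xc))^2 + c2*(Wx - xc)^2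
        + (1-c1-c2)*(px - xc)^2 := by rw [hFx]; exact jx
    have hy2 : fcy^2 ≤ c1*(lam*py)^2 + c2*Wy^2 + (1-c1-c2)*py^2 := by
      rw [hFy]; exact jy
    have htotal : 1 ≤ c1*(((1-lam)*(xa-xc) + lam*(px-xc))^2 + (lam*py)^2)
        + c2*((Wx - xc)^2 + Wy^2) + (1-c1-c2)*((px - xc)^2 + py^2) := by
      linarith only [hx2, hy2, huc]
    apply tail
    have t1 : c1*(((1-lam)*(xa-xc) + lam*(px-xc))^2 + (lam*py)^2) ≤ c1*1 :=
      mul_le_mul_of_nonneg_left he1C hc10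
    have t2 : (1-c1-c2)*((px - xc)^2 + py^2) ≤ (1-c1-c2)*1 :=
      mul_le_mul_of_nonneg_left hpC hc3
    have hc2z : c2 = 0 := by
      rcases eq_or_lt_of_le hc20 with h | h
      · exact h.symm
      · exfalso
        have t3 : c2*((Wx - xc)^2 + Wy^2) < c2*1 :=
          (mul_lt_mul_iff_right₀ h).mpr hWC
        linarith only [htotal, t1, t2, t3]
    rw [← hc2m, hc2z]; ring

/-- The grounded point `(x, 0)`. -/
noncomputable def gpt (x : ℝ) : EuclideanSpace ℝ (Fin 2) := WithLp.toLp 2 ![x, 0]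

/-- The grounded segment with grounded endpoint `(x,0)` and free endpoint `f`. -/
noncomputable def GSeg (x : ℝ) (f : EuclideanSpace ℝ (Fin 2)) :
    Set (EuclideanSpace ℝ (Fin 2)) := segment ℝ (gpt x) f

/-- A grounded unit-length segment: the free endpoint lies strictly above the
x-axis and the segment has Euclidean length 1. -/
def IsGUnit (x : ℝ) (f : EuclideanSpace ℝ (Fin 2)) : Prop :=
  f 1 > 0 ∧ dist (gpt x) f = 1

lemma gpt_zero (x : ℝ) : gpt x 0 = x := rfl
lemma gpt_one (x : ℝ) : gpt x 1 = 0 := rfl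

lemma isGUnit_coords {x : ℝ} {f : EuclideanSpace ℝ (Fin 2)} (h : IsGUnit x f) :
    0 < f 1 ∧ (f 0 - x)^2 + (f 1)^2 = 1 := by
  refine ⟨h.1, ?_⟩
  have hd := h.2
  rw [EuclideanSpace.dist_eq, Fin.sum_univ_two] at hd
  have h1 : (dist (gpt x 0) (f 0))^2 + (dist (gpt x 1) (f 1))^2 = 1 := by
    have := Real.sqrt_eq_one.mp hd
    linarith [this]
  rw [gpt_zero, gpt_one, Real.dist_eq, Real.dist_eq, sq_abs, sq_abs] at h1
  nlinarith [h1]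

lemma mem_GSeg_iff (x : ℝ) (f z : EuclideanSpace ℝ (Fin 2)) :
    z ∈ GSeg x f ↔ ∃ t, 0 ≤ t ∧ t ≤ 1 ∧ z 0 = x + t*(f 0 - x) ∧ z 1 = t * f 1 := by
  constructor
  · rintro ⟨a, b, ha, hb, hab, heq⟩
    refine ⟨b, hb, by linarith, ?_, ?_⟩
    · have := congrArg (fun v : EuclideanSpace ℝ (Fin 2) => v 0) heq
      simp only [PiLp.add_apply, PiLp.smul_apply, smul_eq_mul, gpt_zero] at this
      rw [← this]; have : a = 1 - b := by linarith
      rw [this]; ring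
    · have := congrArg (fun v : EuclideanSpace ℝ (Fin 2) => v 1) heq
      simp only [PiLp.add_apply, PiLp.smul_apply, smul_eq_mul, gpt_one] at this
      rw [← this]; ring
  · rintro ⟨t, ht0, ht1, hz0, hz1⟩
    refine ⟨1 - t, t, by linarith, ht0, by ring, ?_⟩
    ext i
    fin_cases i
    · show (1 - t) * gpt x 0 + t * f 0 = z 0
      rw [hz0, gpt_zero]; ring
    · show (1 - t) * gpt x 1 + t * f 1 = z 1
      rw [hz1, gpt_one]; ring

/-- Umbrella-freeness of the left-to-right ordering of grounded unit segments that
intersect two given intersecting segments `s_ℓ`, `s_r` and are grounded between them. -/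
theorem stmt_10
    (xl xr xa xc xb : ℝ) (fl fr fa fc fb : EuclideanSpace ℝ (Fin 2))
    (hl : IsGUnit xl fl) (hr : IsGUnit xr fr)
    (ha : IsGUnit xa fa) (hc : IsGUnit xc fc) (hb : IsGUnit xb fb)
    (hlr : (GSeg xl fl ∩ GSeg xr fr).Nonempty)
    (hal : (GSeg xa fa ∩ GSeg xl fl).Nonempty) (har : (GSeg xa fa ∩ GSeg xr fr).Nonempty)
    (hcl : (GSeg xc fc ∩ GSeg xl fl).Nonempty) (hcr : (GSeg xc fc ∩ GSeg xr fr).Nonempty)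
    (hbl : (GSeg xb fb ∩ GSeg xl fl).Nonempty) (hbr : (GSeg xb fb ∩ GSeg xr fr).Nonempty)
    (horder : xl ≤ xa ∧ xa < xc ∧ xc < xb ∧ xb ≤ xr)
    (hab : (GSeg xa fa ∩ GSeg xb fb).Nonempty) :
    (GSeg xc fc ∩ GSeg xa fa).Nonempty ∨ (GSeg xc fc ∩ GSeg xb fb).Nonempty := by
  obtain ⟨hxla, hac, hcb, hbr'⟩ := horder
  obtain ⟨hfl1, hfl2⟩ := isGUnit_coords hl
  obtain ⟨hfr1, hfr2⟩ := isGUnit_coords hr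
  obtain ⟨hfa1, hfa2⟩ := isGUnit_coords ha
  obtain ⟨hfc1, hfc2⟩ := isGUnit_coords hc
  obtain ⟨hfb1, hfb2⟩ := isGUnit_coords hb
  by_contra hcon
  have hnA : ¬ (GSeg xc fc ∩ GSeg xa fa).Nonempty := fun hn => hcon (Or.inl hn)
  have hnB : ¬ (GSeg xc fc ∩ GSeg xb fb).Nonempty := fun hn => hcon (Or.inr hn)
  -- disjointness in coordinates
  have hdA : ∀ t s, 0 ≤ t → t ≤ 1 → 0 ≤ s → s ≤ 1 →
      ¬(xc + t*(fc 0 - xc) = xa + s*(fa 0 - xa) ∧ t*(fc 1) = s*(fa 1)) := by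
    intro t s ht0 ht1 hs0 hs1 hEq
    apply hnA
    refine ⟨(WithLp.toLp 2 ![xc + t*(fc 0 - xc), t * fc 1] : EuclideanSpace ℝ (Fin 2)), ?_, ?_⟩
    · rw [mem_GSeg_iff]; exact ⟨t, ht0, ht1, rfl, rfl⟩
    · rw [mem_GSeg_iff]; exact ⟨s, hs0, hs1, hEq.1, hEq.2⟩
  have hdB : ∀ t s, 0 ≤ t → t ≤ 1 → 0 ≤ s → s ≤ 1 →
      ¬(xc + t*(fc 0 - xc) = xb + s*(fb 0 - xb) ∧ t*(fc 1) = s*(fb 1)) := by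
    intro t s ht0 ht1 hs0 hs1 hEq
    apply hnB
    refine ⟨(WithLp.toLp 2 ![xc + t*(fc 0 - xc), t * fc 1] : EuclideanSpace ℝ (Fin 2)), ?_, ?_⟩
    · rw [mem_GSeg_iff]; exact ⟨t, ht0, ht1, rfl, rfl⟩
    · rw [mem_GSeg_iff]; exact ⟨s, hs0, hs1, hEq.1, hEq.2⟩
  -- the crossing point p of s_a and s_b
  obtain ⟨zab, hzab_a, hzab_b⟩ := hab
  rw [mem_GSeg_iff] at hzab_a hzab_b
  obtain ⟨sa, hsa0, hsa1, hpa0, hpa1⟩ := hzab_a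
  obtain ⟨sb, hsb0, hsb1, hpb0, hpb1⟩ := hzab_b
  have hpy0 : 0 < zab 1 := by
    have h0 : 0 ≤ zab 1 := by rw [hpa1]; exact mul_nonneg hsa0 (le_of_lt hfa1)
    rcases eq_or_lt_of_le h0 with h | h
    · exfalso
      have hza1 : zab 1 = 0 := h.symm
      have hsa' : sa = 0 := by
        have h3 : sa * fa 1 = 0 := by rw [← hpa1, hza1]
        rcases mul_eq_zero.mp h3 with h2 | h2
        · exact h2
        · exact absurd h2 (ne_of_gt hfa1)
      have hsb' : sb = 0 := by
        have h3 : sb * fb 1 = 0 := by rw [← hpb1, hza1]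
        rcases mul_eq_zero.mp h3 with h2 | h2
        · exact h2
        · exact absurd h2 (ne_of_gt hfb1)
      have e1 : zab 0 = xa := by rw [hpa0, hsa']; ring
      have e2 : zab 0 = xb := by rw [hpb0, hsb']; ring
      linarith only [e1, e2, hac, hcb]
    · exact h
  have hApSqE : (zab 0 - xa)^2 + (zab 1)^2 = sa^2 := by
    rw [hpa0, hpa1]; linear_combination sa^2*hfa2
  have hBpSqE : (zab 0 - xb)^2 + (zab 1)^2 = sb^2 := by
    rw [hpb0, hpb1]; linear_combination sb^2*hfb2
  have hApSq : (zab 0 - xa)^2 + (zab 1)^2 ≤ 1 := by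
    have := sq_le_one_of sa hsa0 hsa1; linarith only [hApSqE, this]
  have hBpSq : (zab 0 - xb)^2 + (zab 1)^2 ≤ 1 := by
    have := sq_le_one_of sb hsb0 hsb1; linarith only [hBpSqE, this]
  rcases le_or_gt (xb - xc) 1 with hQ | hQ
  · rcases le_or_gt (xc - xa) 1 with hP | hP
    · -- both short: core1
      exact core1 xa xc xb (fa 0) (fa 1) (fb 0) (fb 1) (fc 0) (fc 1) (zab 0) (zab 1)
        sa sb hfc1 hfc2 hac hcb hP hQ hsa0 hsa1 hsb0 hsb1 hpa0 hpa1 hpb0 hpb1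
        hpy0 hApSq hBpSq hdA hdB
    · -- xc - xa > 1 : mirrored core2 using s_r
      obtain ⟨zu, hzu_c, hzu_r⟩ := hcr
      rw [mem_GSeg_iff] at hzu_c hzu_r
      obtain ⟨tc2, htc20, htc21, hu_c0, hu_c1⟩ := hzu_c
      obtain ⟨tr2, htr20, htr21, hu_r0, hu_r1⟩ := hzu_r
      obtain ⟨zw, hzw_a, hzw_r⟩ := har
      rw [mem_GSeg_iff] at hzw_a hzw_r
      obtain ⟨wa, hwa0, hwa1, hw_a0, hw_a1⟩ := hzw_a
      obtain ⟨wr, hwr0, hwr1, hw_r0, hw_r1⟩ := hzw_r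
      have hdA' : ∀ t s, 0 ≤ t → t ≤ 1 → 0 ≤ s → s ≤ 1 →
          ¬(-xc + t*(-(fc 0) - -xc) = -xb + s*(-(fb 0) - -xb) ∧ t*(fc 1) = s*(fb 1)) := by
        intro t s ht0 ht1 hs0 hs1 hEq
        exact hdB t s ht0 ht1 hs0 hs1 ⟨by linear_combination -hEq.1, hEq.2⟩
      have hdB' : ∀ t s, 0 ≤ t → t ≤ 1 → 0 ≤ s → s ≤ 1 →
          ¬(-xc + t*(-(fc 0) - -xc) = -xa + s*(-(fa 0) - -xa) ∧ t*(fc 1) = s*(fa 1)) := by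
        intro t s ht0 ht1 hs0 hs1 hEq
        exact hdA t s ht0 ht1 hs0 hs1 ⟨by linear_combination -hEq.1, hEq.2⟩
      exact core2 (-xr) (-xb) (-xc) (-xa) (-(fr 0)) (fr 1) (-(fb 0)) (fb 1)
        (-(fa 0)) (fa 1) (-(fc 0)) (fc 1) (-(zab 0)) (zab 1) sb sa tc2 tr2 wa wr
        hfr1 (by linear_combination hfr2)
        hfa1 (by linear_combination hfa2)
        hfc1 (by linear_combination hfc2)
        (by linarith only [hbr']) (by linarith only [hcb]) (by linarith only [hac])
        (by linarith only [hP])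
        hsb0 hsb1 hsa0 hsa1
        (by linear_combination -hpb0) hpb1 (by linear_combination -hpa0) hpa1
        hpy0
        (by rw [show (-(zab 0) - -xb) = -(zab 0 - xb) by ring, neg_sq]; exact hBpSq)
        (by rw [show (-(zab 0) - -xa) = -(zab 0 - xa) by ring, neg_sq]; exact hApSq)
        htc20 htc21 htr20 htr21
        (by linear_combination -(hu_c0.symm.trans hu_r0)) (hu_c1.symm.trans hu_r1)
        hwa0 hwa1 hwr0 hwr1
        (by linear_combination -(hw_a0.symm.trans hw_r0)) (hw_a1.symm.trans hw_r1)
        hdA' hdB'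
  · -- xb - xc > 1 : core2 with s_l
    obtain ⟨zu, hzu_c, hzu_l⟩ := hcl
    rw [mem_GSeg_iff] at hzu_c hzu_l
    obtain ⟨tc2, htc20, htc21, hu_c0, hu_c1⟩ := hzu_c
    obtain ⟨tl2, htl20, htl21, hu_l0, hu_l1⟩ := hzu_l
    obtain ⟨zw, hzw_b, hzw_l⟩ := hbl
    rw [mem_GSeg_iff] at hzw_b hzw_l
    obtain ⟨wb, hwb0, hwb1, hw_b0, hw_b1⟩ := hzw_b
    obtain ⟨wl, hwl0, hwl1, hw_l0, hw_l1⟩ := hzw_l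
    exact core2 xl xa xc xb (fl 0) (fl 1) (fa 0) (fa 1) (fb 0) (fb 1) (fc 0) (fc 1)
      (zab 0) (zab 1) sa sb tc2 tl2 wb wl
      hfl1 hfl2 hfb1 hfb2 hfc1 hfc2 hxla hac hcb hQ
      hsa0 hsa1 hsb0 hsb1 hpa0 hpa1 hpb0 hpb1 hpy0 hApSq hBpSq
      htc20 htc21 htl20 htl21
      (hu_c0.symm.trans hu_l0) (hu_c1.symm.trans hu_l1)
      hwb0 hwb1 hwl0 hwl1
      (hw_b0.symm.trans hw_l0) (hw_b1.symm.trans hw_l1)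
      hdA hdB
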